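/- Let κ > 1 and ε ∈ (0, 1/2). Set b = ⌈κ² log(κ/ε)⌉ and d = ⌈√(b · log(4b/ε))⌉, and define the odd polynomial P(x) = 4 Σ_{j=0}^{d} (−1)^j [2^{−2b} Σ_{i=j+1}^{b} C(2b, b+i)] T_{2j+1}(x), where T_m is the m-th Chebyshev polynomial of the first kind. Then for every real x with 1/κ ≤ |x| ≤ 1, |P(x) − 1/x| ≤ 2ε. -/

import Mathlib

open Polynomial Finset

lemma stepA (b : ℕ) (z : ℂ) :
    Complex.sin z ^ (2*b) * 4^b =
      ∑ k ∈ range (2*b+1), (-1:ℂ)^(b+k) * ((2*b).choose k : ℂ) *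
        Complex.exp ((2*(b:ℂ)-2*k)*z*Complex.I) := by
  have hsin : Complex.sin z = ((Complex.exp (-z*Complex.I) - Complex.exp (z*Complex.I)) * Complex.I) / 2 := by
    rw [Complex.sin]
  rw [hsin]
  rw [div_pow, mul_pow, sub_eq_add_neg, add_pow]
  have hI : (Complex.I)^(2*b) = (-1:ℂ)^b := by
    rw [pow_mul, Complex.I_sq]
  rw [hI]
  rw [div_mul_eq_mul_div, Finset.sum_mul, Finset.sum_mul, Finset.sum_div]
  apply Finset.sum_congr rfl
  intro k hk
  simp only [Finset.mem_range] at hk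
  have hk' : k ≤ 2*b := by omega
  have h1 : (-Complex.exp (z*Complex.I))^(2*b-k) = (-1:ℂ)^k * Complex.exp (z*Complex.I)^(2*b-k) := by
    rw [neg_pow]
    congr 1
    have e : 2*b - k + 2*k = 2*b + k := by omega
    calc (-1:ℂ)^(2*b-k) = (-1)^(2*b-k) * ((-1:ℂ)^2)^k := by norm_num
    _ = (-1:ℂ)^(2*b-k+2*k) := by rw [pow_add, pow_mul]
    _ = (-1:ℂ)^(2*b+k) := by rw [e]
    _ = (-1:ℂ)^k := by rw [pow_add]; simp [pow_mul]
  have h2 : Complex.exp ((k:ℂ) * (-z*Complex.I)) * Complex.exp (((2*b-k : ℕ):ℂ) * (z*Complex.I)) = Complex.exp ((2*(b:ℂ)-2*k)*z*Complex.I) := by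
    rw [← Complex.exp_add]
    congr 1
    have : ((2*b-k : ℕ) : ℂ) = 2*b - k := by push_cast [Nat.cast_sub hk']; ring
    rw [this]; ring
  have h4 : (4:ℂ)^b = 2^(2*b) := by rw [pow_mul]; norm_num
  rw [h1, ← Complex.exp_nat_mul, ← Complex.exp_nat_mul, h4, pow_add]
  rw [← h2]
  have h2b : (2:ℂ)^(2*b) ≠ 0 := pow_ne_zero _ two_ne_zero
  field_simp

lemma stepB (b : ℕ) (θ : ℝ) :
    Real.sin θ ^ (2*b) * 4^b =
      ((2*b).choose b : ℝ) + 2 * ∑ k ∈ Icc 1 b, (-1:ℝ)^k * ((2*b).choose (b+k) : ℝ) * Real.cos (2*k*θ) := by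
  have := stepA b (θ : ℂ)
  apply Complex.ofReal_injective
  push_cast [Complex.ofReal_sin, Complex.ofReal_cos]
  rw [this]
  set f : ℕ → ℂ := fun k => (-1:ℂ)^(b+k) * ((2*b).choose k : ℂ) * Complex.exp ((2*(b:ℂ)-2*k)*(θ:ℂ)*Complex.I) with hf
  have hsplit : ∑ k ∈ range (2*b+1), f k = ∑ k ∈ range b, f k + ∑ k ∈ Icc b (2*b), f k := by
    rw [← Finset.sum_union]
    · congr 1
      ext k; simp [Finset.mem_range, Finset.mem_Icc]; omega
    · rw [Finset.disjoint_left]; intro k hk hk'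
      simp [Finset.mem_range, Finset.mem_Icc] at hk hk'; omega
  have hsplit2 : ∑ k ∈ Icc b (2*b), f k = f b + ∑ k ∈ Icc (b+1) (2*b), f k := by
    rw [show Icc b (2*b) = insert b (Icc (b+1) (2*b)) by ext k; simp [Finset.mem_Icc]; omega]
    rw [Finset.sum_insert (by simp [Finset.mem_Icc])]
  have h1 : ∑ k ∈ range b, f k = ∑ m ∈ Icc 1 b, f (b - m) := by
    apply Finset.sum_nbij' (fun k => b - k) (fun m => b - m)
    · intro k hk; simp [Finset.mem_range] at hk; simp [Finset.mem_Icc]; omega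
    · intro m hm; simp [Finset.mem_Icc] at hm; simp [Finset.mem_range]; omega
    · intro k hk; simp [Finset.mem_range] at hk; omega
    · intro m hm; simp [Finset.mem_Icc] at hm; omega
    · intro k hk; simp [Finset.mem_range] at hk; congr 1; omega
  have h2 : ∑ k ∈ Icc (b+1) (2*b), f k = ∑ m ∈ Icc 1 b, f (b + m) := by
    apply Finset.sum_nbij' (fun k => k - b) (fun m => b + m)
    · intro k hk; simp [Finset.mem_Icc] at hk ⊢; omega
    · intro m hm; simp [Finset.mem_Icc] at hm ⊢; omega
    · intro k hk; simp [Finset.mem_Icc] at hk; omega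
    · intro m hm; omega
    · intro k hk; simp [Finset.mem_Icc] at hk; congr 1; omega
  have hfb : f b = ((2*b).choose b : ℂ) := by
    simp only [hf]
    have : (2*(b:ℂ)-2*b)*(θ:ℂ)*Complex.I = 0 := by ring
    rw [this, Complex.exp_zero, ← two_mul, pow_mul]
    norm_num
  have hpair : ∀ m ∈ Icc 1 b, f (b - m) + f (b + m) =
      2 * ((-1:ℂ)^m * ((2*b).choose (b+m) : ℂ) * Complex.cos (2*m*θ)) := by
    intro m hm
    simp only [Finset.mem_Icc] at hm
    have hmb : m ≤ b := hm.2
    simp only [hf]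
    have c1 : ((b - m : ℕ) : ℂ) = (b : ℂ) - m := by push_cast [Nat.cast_sub hmb]; ring
    have c2 : (2*(b:ℂ)-2*((b:ℂ)-m))*(θ:ℂ)*Complex.I = (2*m*θ:ℂ)*Complex.I := by push_cast; ring
    have c3 : (2*(b:ℂ)-2*((b:ℕ)+m:ℕ))*(θ:ℂ)*Complex.I = -((2*m*θ:ℂ)*Complex.I) := by push_cast; ring
    have s1 : (-1:ℂ)^(b+(b-m)) = (-1:ℂ)^m := by
      have e : b + (b - m) + m = 2*b := by omega
      have : (-1:ℂ)^(b+(b-m)) * (-1:ℂ)^m = 1 := by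
        rw [← pow_add, e, pow_mul]; norm_num
      have hm1 : (-1:ℂ)^m * (-1:ℂ)^m = 1 := by rw [← pow_add, ← two_mul, pow_mul]; norm_num
      calc (-1:ℂ)^(b+(b-m)) = (-1:ℂ)^(b+(b-m)) * ((-1:ℂ)^m * (-1:ℂ)^m) := by rw [hm1]; ring
      _ = ((-1:ℂ)^(b+(b-m)) * (-1:ℂ)^m) * (-1:ℂ)^m := by ring
      _ = (-1:ℂ)^m := by rw [this]; ring
    have s2 : (-1:ℂ)^(b+(b+m)) = (-1:ℂ)^m := by
      have e : b + (b + m) = 2*b + m := by omega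
      rw [e, pow_add, pow_mul]; norm_num
    have cs : ((2*b).choose (b - m) : ℂ) = ((2*b).choose (b+m) : ℂ) := by
      norm_cast
      rw [← Nat.choose_symm (by omega : b - m ≤ 2*b)]
      congr 1; omega
    have hcos : Complex.exp ((2*m*θ:ℂ)*Complex.I) + Complex.exp (-((2*m*θ:ℂ)*Complex.I)) = 2 * Complex.cos (2*m*θ) := by
      rw [Complex.cos]; ring_nf
    rw [c1, c2]
    rw [show ((b + m : ℕ) : ℂ) = ((b:ℕ):ℂ) + m by push_cast; ring] at *
    rw [show (2*(b:ℂ)-2*((b:ℂ)+m))*(θ:ℂ)*Complex.I = -((2*m*θ:ℂ)*Complex.I) by push_cast; ring]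
    rw [s1, s2, cs]
    linear_combination ((-1:ℂ)^m * ((2*b).choose (b+m) : ℂ)) * hcos
  rw [hsplit, hsplit2, h1, h2, hfb]
  have key : ∑ m ∈ Icc 1 b, f (b - m) + ∑ m ∈ Icc 1 b, f (b + m)
      = 2 * ∑ m ∈ Icc 1 b, ((-1:ℂ)^m * ((2*b).choose (b+m) : ℂ) * Complex.cos (2*(m:ℂ)*(θ:ℂ))) := by
    rw [← Finset.sum_add_distrib, Finset.mul_sum]
    exact Finset.sum_congr rfl (by intro m hm; rw [hpair m hm])
  linear_combination key

lemma choose_sum (b : ℕ) :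
    ((2*b).choose b : ℝ) + 2 * ∑ i ∈ Icc 1 b, ((2*b).choose (b+i) : ℝ) = 4^b := by
  set f : ℕ → ℝ := fun k => ((2*b).choose k : ℝ) with hfdef
  have htot : ∑ k ∈ range (2*b+1), f k = 4^b := by
    calc ∑ k ∈ range (2*b+1), f k = ((∑ i ∈ range (2*b+1), (2*b).choose i : ℕ) : ℝ) := by
          push_cast; rfl
    _ = ((2^(2*b) : ℕ) : ℝ) := by rw [Nat.sum_range_choose]
    _ = 4^b := by push_cast; rw [pow_mul]; norm_num
  have hsplit : ∑ k ∈ range (2*b+1), f k = ∑ k ∈ range b, f k + ∑ k ∈ Icc b (2*b), f k := by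
    rw [← Finset.sum_union]
    · congr 1
      ext k; simp [Finset.mem_range, Finset.mem_Icc]; omega
    · rw [Finset.disjoint_left]; intro k hk hk'
      simp [Finset.mem_range, Finset.mem_Icc] at hk hk'; omega
  have hsplit2 : ∑ k ∈ Icc b (2*b), f k = f b + ∑ k ∈ Icc (b+1) (2*b), f k := by
    rw [show Icc b (2*b) = insert b (Icc (b+1) (2*b)) by ext k; simp [Finset.mem_Icc]; omega]
    rw [Finset.sum_insert (by simp [Finset.mem_Icc])]
  have h1 : ∑ k ∈ range b, f k = ∑ m ∈ Icc 1 b, f (b + m) := by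
    apply Finset.sum_nbij' (fun k => b - k) (fun m => b - m)
    · intro k hk; simp [Finset.mem_range] at hk; simp [Finset.mem_Icc]; omega
    · intro m hm; simp [Finset.mem_Icc] at hm; simp [Finset.mem_range]; omega
    · intro k hk; simp [Finset.mem_range] at hk; omega
    · intro m hm; simp [Finset.mem_Icc] at hm; omega
    · intro k hk; simp [Finset.mem_range] at hk
      simp only [hfdef]
      norm_cast
      rw [← Nat.choose_symm (by omega : k ≤ 2*b)]
      congr 1; omega
  have h2 : ∑ k ∈ Icc (b+1) (2*b), f k = ∑ m ∈ Icc 1 b, f (b + m) := by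
    apply Finset.sum_nbij' (fun k => k - b) (fun m => b + m)
    · intro k hk; simp [Finset.mem_Icc] at hk ⊢; omega
    · intro m hm; simp [Finset.mem_Icc] at hm ⊢; omega
    · intro k hk; simp [Finset.mem_Icc] at hk; omega
    · intro m hm; omega
    · intro k hk; simp [Finset.mem_Icc] at hk; congr 1; omega
  have : f b + 2 * ∑ m ∈ Icc 1 b, f (b + m) = 4^b := by
    rw [← htot, hsplit, hsplit2, h1, h2]; ring
  simpa [hfdef] using this

lemma stepC (b : ℕ) (θ : ℝ) :
    (4 * ∑ j ∈ range b, (-1:ℝ)^j *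
        (∑ i ∈ Icc (j+1) b, ((2*b).choose (b+i) : ℝ)) * Real.cos ((2*(j:ℝ)+1)*θ)) * Real.cos θ
      = 4^b - Real.sin θ ^ (2*b) * 4^b := by
  rcases Nat.eq_zero_or_pos b with hb0 | hb1
  · subst hb0; simp
  set A : ℕ → ℝ := fun j => ∑ i ∈ Icc (j+1) b, ((2*b).choose (b+i) : ℝ) with hA
  set c : ℕ → ℝ := fun k => Real.cos (2*(k:ℝ)*θ) with hc
  have hAb : A b = 0 := by simp [hA]
  have hAstep : ∀ k, 1 ≤ k → k ≤ b → A (k-1) = A k + ((2*b).choose (b+k) : ℝ) := by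
    intro k h1 h2
    have : Icc ((k-1)+1) b = insert k (Icc (k+1) b) := by
      ext i; simp [Finset.mem_Icc]; omega
    simp only [hA]
    rw [this, Finset.sum_insert (by simp [Finset.mem_Icc])]
    ring
  have hprod : ∀ j : ℕ, Real.cos ((2*(j:ℝ)+1)*θ) * Real.cos θ = (c j + c (j+1))/2 := by
    intro j
    simp only [hc]
    push_cast
    rw [show (2*((j:ℝ)+1))*θ = (2*(j:ℝ)+1)*θ + θ by ring, show (2*(j:ℝ))*θ = (2*(j:ℝ)+1)*θ - θ by ring,
      Real.cos_add, Real.cos_sub]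
    ring
  have hLHS : (4 * ∑ j ∈ range b, (-1:ℝ)^j * A j * Real.cos ((2*(j:ℝ)+1)*θ)) * Real.cos θ
      = 2 * ∑ j ∈ range b, (-1:ℝ)^j * A j * c j + 2 * ∑ j ∈ range b, (-1:ℝ)^j * A j * c (j+1) := by
    rw [Finset.mul_sum, Finset.sum_mul, Finset.mul_sum, Finset.mul_sum, ← Finset.sum_add_distrib]
    apply Finset.sum_congr rfl
    intro j hj
    linear_combination (4*(-1:ℝ)^j * A j) * hprod j
  have hshift : ∑ j ∈ range b, (-1:ℝ)^j * A j * c (j+1)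
      = ∑ k ∈ Icc 1 b, -((-1:ℝ)^k * A (k-1) * c k) := by
    apply Finset.sum_nbij' (fun j => j + 1) (fun k => k - 1)
    · intro j hj; simp [Finset.mem_range] at hj; simp [Finset.mem_Icc]; omega
    · intro k hk; simp [Finset.mem_Icc] at hk; simp [Finset.mem_range]; omega
    · intro j hj; omega
    · intro k hk; simp [Finset.mem_Icc] at hk; omega
    · intro j hj
      rw [show (j+1) - 1 = j from rfl, pow_succ]
      ring
  have hfirst : ∑ j ∈ range b, (-1:ℝ)^j * A j * c j
      = A 0 + ∑ k ∈ Icc 1 b, (-1:ℝ)^k * A k * c k := by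
    have e1 : range b = insert 0 (Icc 1 (b-1)) := by
      ext j; simp [Finset.mem_range, Finset.mem_Icc]; omega
    have e2 : Icc 1 b = insert b (Icc 1 (b-1)) := by
      ext k; simp [Finset.mem_Icc]; omega
    rw [e1, e2, Finset.sum_insert (by simp), Finset.sum_insert (by simp [Finset.mem_Icc]; omega)]
    rw [hAb]
    have hc0 : c 0 = 1 := by simp [hc]
    rw [hc0]
    ring
  rw [hLHS, hshift, hfirst]
  have hcomb : (∑ k ∈ Icc 1 b, (-1:ℝ)^k * A k * c k) + (∑ k ∈ Icc 1 b, -((-1:ℝ)^k * A (k-1) * c k))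
      + (∑ k ∈ Icc 1 b, (-1:ℝ)^k * ((2*b).choose (b+k):ℝ) * c k) = 0 := by
    rw [← Finset.sum_add_distrib, ← Finset.sum_add_distrib]
    apply Finset.sum_eq_zero
    intro k hk
    simp only [Finset.mem_Icc] at hk
    rw [hAstep k hk.1 hk.2]
    ring
  have hB := stepB b θ
  have hC := choose_sum b
  have hA0 : A 0 = ∑ i ∈ Icc 1 b, ((2*b).choose (b+i):ℝ) := rfl
  simp only [hc] at hcomb
  linear_combination 2*hcomb + hB + hC + 2*hA0

lemma tail_bound (b j : ℕ) (hb : 1 ≤ b) :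
    (∑ i ∈ Icc j b, ((2*b).choose (b+i) : ℝ)) ≤ 4^b * Real.exp (-(j:ℝ)^2 / b) := by
  have hbpos : (0:ℝ) < b := by exact_mod_cast hb
  set t : ℝ := (j:ℝ)/b with ht
  have htnn : 0 ≤ t := by positivity
  set s : ℝ := Real.exp t with hs
  have hs1 : 1 ≤ s := Real.one_le_exp htnn
  have hspos : 0 < s := lt_of_lt_of_le one_pos hs1
  have key : (∑ i ∈ Icc j b, ((2*b).choose (b+i) : ℝ)) * s^(2*(b+j)) ≤ (1+s^2)^(2*b) := by
    have h1 : (∑ i ∈ Icc j b, ((2*b).choose (b+i) : ℝ)) * s^(2*(b+j))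
        ≤ ∑ i ∈ Icc j b, ((2*b).choose (b+i) : ℝ) * (s^2)^(b+i) := by
      rw [Finset.sum_mul]
      apply Finset.sum_le_sum
      intro i hi
      simp only [Finset.mem_Icc] at hi
      have hmono : s^(2*(b+j)) ≤ s^(2*(b+i)) := pow_le_pow_right₀ hs1 (by omega)
      have hrw : (s^2)^(b+i) = s^(2*(b+i)) := (pow_mul s 2 (b+i)).symm
      rw [hrw]
      exact mul_le_mul_of_nonneg_left hmono (by positivity)
    have h2 : ∑ i ∈ Icc j b, ((2*b).choose (b+i) : ℝ) * (s^2)^(b+i)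
        ≤ ∑ k ∈ range (2*b+1), ((2*b).choose k : ℝ) * (s^2)^k := by
      have := Finset.sum_image (g := fun i => b + i) (f := fun k => ((2*b).choose k : ℝ) * (s^2)^k)
        (s := Icc j b) (by intro x _ y _ h; simpa using h)
      rw [← this]
      apply Finset.sum_le_sum_of_subset_of_nonneg
      · intro k hk; simp only [Finset.mem_image, Finset.mem_Icc] at hk
        simp only [Finset.mem_range]; omega
      · intro k _ _; positivity
    have h3 : ∑ k ∈ range (2*b+1), ((2*b).choose k : ℝ) * (s^2)^k = (1+s^2)^(2*b) := by
      rw [show (1:ℝ)+s^2 = s^2+1 by ring, add_pow]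
      apply Finset.sum_congr rfl
      intro k _
      simp [mul_comm]
    calc _ ≤ _ := h1
    _ ≤ _ := h2
    _ = _ := h3
  have hcosh : 1 + s^2 = s * (2 * Real.cosh t) := by
    rw [Real.cosh_eq, hs]
    have h : Real.exp t * Real.exp (-t) = 1 := by rw [← Real.exp_add]; simp
    linear_combination -h
  have hbne : (b:ℝ) ≠ 0 := ne_of_gt hbpos
  have e1 : (s * (2 * Real.exp (t^2/2)))^(2*b) = 4^b * Real.exp (2*b*t + b*t^2) := by
    rw [mul_pow, mul_pow, hs, ← Real.exp_nat_mul, ← Real.exp_nat_mul]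
    rw [show ((2:ℝ))^(2*b) = 4^b by rw [pow_mul]; norm_num, mul_left_comm, ← Real.exp_add]
    congr 1
    push_cast; ring
  have e2 : s^(2*(b+j)) * (4^b * Real.exp (-(j:ℝ)^2/(b:ℝ))) = 4^b * Real.exp (2*b*t + b*t^2) := by
    rw [hs, ← Real.exp_nat_mul, mul_left_comm, ← Real.exp_add]
    congr 1
    simp only [ht]
    push_cast
    field_simp
    ring
  have hup : (1+s^2)^(2*b) ≤ s^(2*(b+j)) * (4^b * Real.exp (-(j:ℝ)^2/(b:ℝ))) := by
    rw [hcosh, e2, ← e1]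
    apply pow_le_pow_left₀ (by positivity)
    have hch := Real.cosh_le_exp_half_sq t
    have : 2 * Real.cosh t ≤ 2 * Real.exp (t^2/2) := by linarith
    exact mul_le_mul_of_nonneg_left this hspos.le
  have hfin := key.trans hup
  have hSpos : 0 < s^(2*(b+j)) := by positivity
  rw [mul_comm (s^(2*(b+j)))] at hfin
  exact le_of_mul_le_mul_right hfin hSpos

set_option maxHeartbeats 2000000 in
theorem truncated_chebyshev_inverse_approx (κ ε : ℝ) (hκ : 1 < κ)
    (hε : ε ∈ Set.Ioo (0 : ℝ) (1 / 2))
    (b d : ℕ) (hb : b = ⌈κ ^ 2 * Real.log (κ / ε)⌉₊)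
    (hd : d = ⌈Real.sqrt ((b : ℝ) * Real.log (4 * (b : ℝ) / ε))⌉₊)
    (P : ℝ → ℝ)
    (hP : ∀ x : ℝ, P x =
      4 * ∑ j ∈ Finset.range (d + 1), (-1 : ℝ) ^ j *
        ((2 : ℝ) ^ (-(2 * (b : ℤ))) * ∑ i ∈ Finset.Icc (j + 1) b, ((2 * b).choose (b + i) : ℝ)) *
        (Polynomial.Chebyshev.T ℝ (2 * (j : ℤ) + 1)).eval x) :
    ∀ x : ℝ, 1 / κ ≤ |x| → |x| ≤ 1 → |P x - 1 / x| ≤ 2 * ε := by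
  obtain ⟨hε0, hε2⟩ := hε
  have hκ0 : 0 < κ := by linarith
  -- b ≥ 1
  have hκε : 1 < κ / ε := by
    rw [lt_div_iff₀ hε0]; nlinarith
  have hbl : 0 < κ^2 * Real.log (κ/ε) := by
    have := Real.log_pos hκε
    positivity
  have hb1 : 1 ≤ b := by
    rw [hb]; exact Nat.ceil_pos.mpr hbl
  have hbR : (1:ℝ) ≤ (b:ℝ) := by exact_mod_cast hb1
  have hbpos : (0:ℝ) < b := by linarith
  have hbge : κ^2 * Real.log (κ/ε) ≤ (b:ℝ) := by rw [hb]; exact Nat.le_ceil _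
  -- d bound
  have h4bε : 1 < 4*(b:ℝ)/ε := by
    rw [lt_div_iff₀ hε0]; nlinarith
  have hlog4b : 0 ≤ Real.log (4*(b:ℝ)/ε) := Real.log_nonneg h4bε.le
  have hdge : (b:ℝ) * Real.log (4*(b:ℝ)/ε) ≤ ((d:ℝ))^2 := by
    have h1 : Real.sqrt ((b:ℝ) * Real.log (4*(b:ℝ)/ε)) ≤ (d:ℝ) := by
      rw [hd]; exact Nat.le_ceil _
    have h2 : 0 ≤ (b:ℝ) * Real.log (4*(b:ℝ)/ε) := by positivity
    nlinarith [Real.sq_sqrt h2, Real.sqrt_nonneg ((b:ℝ) * Real.log (4*(b:ℝ)/ε))]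
  -- the two exp bounds
  have hE : Real.exp (-((d:ℝ)+1)^2/(b:ℝ)) ≤ ε/(4*(b:ℝ)) := by
    have hdn : (0:ℝ) ≤ d := Nat.cast_nonneg d
    have harg : -((d:ℝ)+1)^2/(b:ℝ) ≤ -Real.log (4*(b:ℝ)/ε) := by
      rw [div_le_iff₀ hbpos]
      nlinarith
    calc Real.exp (-((d:ℝ)+1)^2/(b:ℝ)) ≤ Real.exp (-Real.log (4*(b:ℝ)/ε)) :=
          Real.exp_le_exp.mpr harg
    _ = ε/(4*(b:ℝ)) := by
        rw [Real.exp_neg, Real.exp_log (by positivity), inv_div]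
  have hE1 : Real.exp (-(b:ℝ)/κ^2) ≤ ε/κ := by
    have harg : -(b:ℝ)/κ^2 ≤ -Real.log (κ/ε) := by
      rw [div_le_iff₀ (by positivity : (0:ℝ) < κ^2)]
      nlinarith
    calc Real.exp (-(b:ℝ)/κ^2) ≤ Real.exp (-Real.log (κ/ε)) := Real.exp_le_exp.mpr harg
    _ = ε/κ := by rw [Real.exp_neg, Real.exp_log (by positivity), inv_div]
  -- main per-x proof
  intro x hx1 hx2
  have hxpos : 0 < |x| := lt_of_lt_of_le (by positivity) hx1
  have hxne : x ≠ 0 := fun h => by rw [h, abs_zero] at hxpos; exact lt_irrefl 0 hxpos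
  set θ : ℝ := Real.arccos x with hθ
  have hcosθ : Real.cos θ = x := Real.cos_arccos (by nlinarith [abs_nonneg x, neg_abs_le x]) (le_trans (le_abs_self x) hx2)
  have hx21 : x^2 ≤ 1 := by nlinarith [sq_abs x, abs_nonneg x]
  have h1x2 : 0 ≤ 1 - x^2 := by linarith
  have hsin2b : Real.sin θ ^ (2*b) = (1-x^2)^b := by
    rw [pow_mul, Real.sin_sq θ, hcosθ]
  set A : ℕ → ℝ := fun j => ∑ i ∈ Icc (j+1) b, ((2*b).choose (b+i) : ℝ) with hA
  have hAnn : ∀ j, 0 ≤ A j := fun j => Finset.sum_nonneg (fun i _ => by positivity)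
  set S : ℕ → ℝ := fun j => (-1:ℝ)^j * A j * Real.cos ((2*(j:ℝ)+1)*θ) with hS
  have hzpow : (2:ℝ)^(-(2*(b:ℤ))) = ((4:ℝ)^b)⁻¹ := by
    rw [show (2*(b:ℤ)) = ((2*b : ℕ) : ℤ) by push_cast; ring, zpow_neg, zpow_natCast, pow_mul]
    norm_num
  have h4bne : ((4:ℝ)^b) ≠ 0 := by positivity
  have hT : ∀ j : ℕ, (Polynomial.Chebyshev.T ℝ (2*(j:ℤ)+1)).eval x = Real.cos ((2*(j:ℝ)+1)*θ) := by
    intro j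
    rw [← hcosθ, Polynomial.Chebyshev.T_real_cos]
    congr 1
    push_cast
    ring
  have hPx : P x = 4 * (((4:ℝ)^b)⁻¹ * ∑ j ∈ range (d+1), S j) := by
    have hterm : ∀ j ∈ range (d+1), (-1:ℝ)^j *
        ((2:ℝ)^(-(2*(b:ℤ))) * ∑ i ∈ Finset.Icc (j+1) b, ((2*b).choose (b+i) : ℝ)) *
        (Polynomial.Chebyshev.T ℝ (2*(j:ℤ)+1)).eval x = ((4:ℝ)^b)⁻¹ * S j := by
      intro j _
      rw [hzpow, hT j]
      simp only [hS, hA]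
      ring
    rw [hP x, Finset.sum_congr rfl hterm, ← Finset.mul_sum]
  -- identity for range b
  have hGx : (4 * (((4:ℝ)^b)⁻¹ * ∑ j ∈ range b, S j)) * x = 1 - (1-x^2)^b := by
    have hc := stepC b θ
    rw [hcosθ, hsin2b] at hc
    have hcs : (4 * ∑ j ∈ range b, S j) * x = 4^b - (1-x^2)^b * 4^b := by
      exact hc
    have hinv : ((4:ℝ)^b)⁻¹ * (4:ℝ)^b = 1 := inv_mul_cancel₀ h4bne
    set Y : ℝ := ∑ j ∈ range b, S j with hY
    clear_value Y
    clear hY hc hP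
    linear_combination ((4:ℝ)^b)⁻¹ * hcs + (1-(1-x^2)^b) * hinv
  set F : ℝ := 4 * (((4:ℝ)^b)⁻¹ * ∑ j ∈ range b, S j) with hF
  have hFval : F = (1-(1-x^2)^b)/x := by
    rw [eq_div_iff hxne]; exact hGx
  -- error of F
  have hFx : |F - 1/x| ≤ ε := by
    have hdiff : F - 1/x = -(1-x^2)^b / x := by
      rw [hFval]; field_simp; ring
    rw [hdiff, abs_div, abs_neg, abs_of_nonneg (pow_nonneg h1x2 b)]
    rw [div_le_iff₀ hxpos]
    have hbase : 1 - x^2 ≤ 1 - 1/κ^2 := by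
      have h := sq_abs x
      have hmul : 0 ≤ (|x| - 1/κ)*(|x| + 1/κ) :=
        mul_nonneg (by linarith) (by positivity)
      have hsq' : (1/κ)^2 ≤ x^2 := by nlinarith
      have e : (1/κ)^2 = 1/κ^2 := by field_simp
      linarith [e ▸ hsq']
    have h0κ : 0 ≤ 1 - 1/κ^2 := by
      have : 1/κ^2 ≤ 1 := by rw [div_le_one (by positivity)]; nlinarith
      linarith
    have hpow : (1-x^2)^b ≤ (1-1/κ^2)^b := pow_le_pow_left₀ h1x2 hbase b
    have hexp1 : (1-1/κ^2)^b ≤ Real.exp (-(b:ℝ)/κ^2) := by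
      have h1 : 1 - 1/κ^2 ≤ Real.exp (-(1/κ^2)) := by
        have := Real.add_one_le_exp (-(1/κ^2)); linarith
      calc (1-1/κ^2)^b ≤ (Real.exp (-(1/κ^2)))^b := pow_le_pow_left₀ h0κ h1 b
      _ = Real.exp (-(b:ℝ)/κ^2) := by
          rw [← Real.exp_nat_mul]; congr 1; ring
    have hchain : (1-x^2)^b ≤ ε/κ := le_trans hpow (le_trans hexp1 hE1)
    have hεx : ε/κ ≤ ε * |x| := by
      calc ε/κ = ε * (1/κ) := by ring
      _ ≤ ε * |x| := mul_le_mul_of_nonneg_left hx1 hε0.le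
    linarith
  -- truncation error
  set M : ℕ := max (d+1) b with hM
  have hbM : b ≤ M := le_max_right _ _
  have hdM : d+1 ≤ M := le_max_left _ _
  have hSzero : ∀ j ∈ Ico b M, S j = 0 := by
    intro j hj
    simp only [Finset.mem_Ico] at hj
    simp only [hS, hA]
    rw [Finset.Icc_eq_empty (by omega : ¬ (j+1 ≤ b))]
    simp
  have hsplitb : ∑ j ∈ range M, S j = ∑ j ∈ range b, S j := by
    rw [Finset.range_eq_Ico, ← Finset.sum_Ico_consecutive _ (Nat.zero_le b) hbM,
      Finset.sum_eq_zero hSzero, ← Finset.range_eq_Ico, add_zero]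
  have hsplitd : ∑ j ∈ range M, S j = ∑ j ∈ range (d+1), S j + ∑ j ∈ Ico (d+1) M, S j := by
    rw [Finset.range_eq_Ico, ← Finset.sum_Ico_consecutive _ (Nat.zero_le (d+1)) hdM,
      ← Finset.range_eq_Ico]
  have hPF : |P x - F| ≤ ε := by
    have hdiff : P x - F = -(4 * (((4:ℝ)^b)⁻¹ * ∑ j ∈ Ico (d+1) M, S j)) := by
      rw [hPx, hF]
      have h1 : ∑ j ∈ range (d+1), S j = ∑ j ∈ range b, S j - ∑ j ∈ Ico (d+1) M, S j := by
        rw [← hsplitb, hsplitd]; ring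
      rw [h1]; ring
    rw [hdiff, abs_neg]
    set E : ℝ := Real.exp (-((d:ℝ)+1)^2/(b:ℝ)) with hEdef
    have hEnn : 0 ≤ E := Real.exp_nonneg _
    have hterm : ∀ j ∈ Ico (d+1) M, |S j| ≤ (4:ℝ)^b * E := by
      intro j hj
      simp only [Finset.mem_Ico] at hj
      have hSabs : |S j| ≤ A j := by
        simp only [hS]
        rw [abs_mul, abs_mul, abs_pow, abs_neg, abs_one, one_pow, one_mul,
          abs_of_nonneg (hAnn j)]
        calc A j * |Real.cos ((2*(j:ℝ)+1)*θ)| ≤ A j * 1 :=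
          mul_le_mul_of_nonneg_left (Real.abs_cos_le_one _) (hAnn j)
        _ = A j := mul_one _
      refine hSabs.trans ((tail_bound b (j+1) hb1).trans ?_)
      have hjd : (d:ℝ)+1 ≤ ((j+1:ℕ):ℝ) := by
        have : d+1 ≤ j+1 := by omega
        exact_mod_cast this
      have hdnn : (0:ℝ) ≤ (d:ℝ)+1 := by positivity
      have hsq : ((d:ℝ)+1)^2 ≤ (((j+1:ℕ)):ℝ)^2 := by nlinarith
      have harg : -(((j+1:ℕ)):ℝ)^2/(b:ℝ) ≤ -((d:ℝ)+1)^2/(b:ℝ) := by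
        rw [div_le_div_iff₀ hbpos hbpos]
        nlinarith [mul_le_mul_of_nonneg_right hsq hbpos.le]
      exact mul_le_mul_of_nonneg_left (Real.exp_le_exp.mpr harg) (by positivity)
    have hsum : ∑ j ∈ Ico (d+1) M, |S j| ≤ ((M - (d+1) : ℕ) : ℝ) * ((4:ℝ)^b * E) := by
      have h := Finset.sum_le_card_nsmul (Ico (d+1) M) (fun j => |S j|) ((4:ℝ)^b * E) hterm
      simpa [Nat.card_Ico, nsmul_eq_mul] using h
    have hcardb : ((M - (d+1) : ℕ) : ℝ) ≤ (b:ℝ) := by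
      have h : M - (d+1) ≤ b := by
        rcases le_total (d+1) b with h'|h'
        · rw [hM, max_eq_right h']; omega
        · rw [hM, max_eq_left h']; omega
      exact_mod_cast h
    have habs : |4 * (((4:ℝ)^b)⁻¹ * ∑ j ∈ Ico (d+1) M, S j)|
        ≤ 4 * (((4:ℝ)^b)⁻¹ * ∑ j ∈ Ico (d+1) M, |S j|) := by
      rw [abs_mul, abs_mul, abs_of_nonneg (by norm_num : (0:ℝ) ≤ 4),
        abs_of_nonneg (by positivity : (0:ℝ) ≤ ((4:ℝ)^b)⁻¹)]
      have h := Finset.abs_sum_le_sum_abs (fun j => S j) (Ico (d+1) M)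
      exact mul_le_mul_of_nonneg_left (mul_le_mul_of_nonneg_left h (by positivity)) (by norm_num)
    have h4binv : (0:ℝ) ≤ ((4:ℝ)^b)⁻¹ := by positivity
    calc |4 * (((4:ℝ)^b)⁻¹ * ∑ j ∈ Ico (d+1) M, S j)|
        ≤ 4 * (((4:ℝ)^b)⁻¹ * ∑ j ∈ Ico (d+1) M, |S j|) := habs
    _ ≤ 4 * (((4:ℝ)^b)⁻¹ * (((M - (d+1):ℕ):ℝ) * ((4:ℝ)^b * E))) := by
        exact mul_le_mul_of_nonneg_left (mul_le_mul_of_nonneg_left hsum h4binv) (by norm_num)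
    _ ≤ 4 * (((4:ℝ)^b)⁻¹ * ((b:ℝ) * ((4:ℝ)^b * E))) := by
        have : ((M - (d+1):ℕ):ℝ) * ((4:ℝ)^b * E) ≤ (b:ℝ) * ((4:ℝ)^b * E) :=
          mul_le_mul_of_nonneg_right hcardb (by positivity)
        exact mul_le_mul_of_nonneg_left (mul_le_mul_of_nonneg_left this h4binv) (by norm_num)
    _ = 4*(b:ℝ)*E := by field_simp
    _ ≤ 4*(b:ℝ)*(ε/(4*(b:ℝ))) := by
        exact mul_le_mul_of_nonneg_left hE (by positivity)
    _ = ε := by field_simp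
  calc |P x - 1/x| = |(P x - F) + (F - 1/x)| := by rw [sub_add_sub_cancel]
  _ ≤ |P x - F| + |F - 1/x| := abs_add_le _ _
  _ ≤ ε + ε := add_le_add hPF hFx
  _ = 2*ε := by ring
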